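/- Let φ be a monotone 1-in-3 SAT instance with n variables and m clauses in which every variable occurs in at least one clause, and let G_φ be the associated classified matching instance. Then there exists a feasible matching M in G_φ with signature (3m + n, 3m + n) — i.e., exactly 3m + n applicants are matched to their rank-1 post and exactly 3m + n applicants are matched to their rank-2 post (so all 2n + 6m applicants are matched) — if and only if φ has a 1-in-3 satisfying assignment. -/

import Mathlib

open scoped Classical

/-- Applicants of the instance `G_φ`: `av i = aᵢ`, `bv i = bᵢ`,
`ac i j = a_{ij}` and `bc i j = b_{ij}` (the latter two meaningful when `i ∈ C_j`). -/
inductive App (n m : ℕ) where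
  | av (i : Fin n) : App n m
  | bv (i : Fin n) : App n m
  | ac (i : Fin n) (j : Fin m) : App n m
  | bc (i : Fin n) (j : Fin m) : App n m
  deriving DecidableEq, Fintype

/-- Posts of the instance `G_φ`: `pv i = pᵢ`, `pt i = pᵢᵗ`, `pf i = pᵢᶠ`
and `pc j = pⱼᶜ`. -/
inductive Post (n m : ℕ) where
  | pv (i : Fin n) : Post n m
  | pt (i : Fin n) : Post n m
  | pf (i : Fin n) : Post n m
  | pc (j : Fin m) : Post n m
  deriving DecidableEq, Fintype

namespace Red

variable {n m : ℕ}

/-- The rank-1 (first-choice) post of each applicant. -/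
def rank1 : App n m → Post n m
  | .av i => .pv i
  | .bv i => .pv i
  | .ac _ j => .pc j
  | .bc _ j => .pc j

/-- The rank-2 (second-choice) post of each applicant. -/
def rank2 : App n m → Post n m
  | .av i => .pt i
  | .bv i => .pf i
  | .ac i _ => .pt i
  | .bc i _ => .pf i

/-- The rank of a post on an applicant's preference list (3 = unacceptable). -/
def rk (x : App n m) (p : Post n m) : ℕ :=
  if p = rank1 x then 1 else if p = rank2 x then 2 else 3

/-- Only pairs `(i, j)` with `i ∈ C_j` give rise to applicants `a_{ij}`, `b_{ij}`. -/
def Valid (Cl : Fin m → Finset (Fin n)) : App n m → Prop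
  | .av _ => True
  | .bv _ => True
  | .ac i j => i ∈ Cl j
  | .bc i j => i ∈ Cl j

/-- `k_i`: the number of clauses containing variable `i`. -/
def occ (Cl : Fin m → Finset (Fin n)) (i : Fin n) : ℕ :=
  (Finset.univ.filter fun j => i ∈ Cl j).card

/-- `M` is a matching of `G_φ`: each (existing) applicant is assigned to at most one
post on its preference list. -/
def IsMatching (Cl : Fin m → Finset (Fin n)) (M : App n m → Option (Post n m)) : Prop :=
  ∀ x p, M x = some p → Valid Cl x ∧ (p = rank1 x ∨ p = rank2 x)

/-- The number of applicants matched to post `p`. -/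
def cnt (M : App n m → Option (Post n m)) (p : Post n m) : ℕ :=
  (Finset.univ.filter fun x => M x = some p).card

/-- `M` is feasible: all post quotas and all class quotas of `G_φ` are respected. -/
def Feasible (Cl : Fin m → Finset (Fin n)) (M : App n m → Option (Post n m)) : Prop :=
  -- post `pᵢ` has quota 1 and no classes
  (∀ i, cnt M (.pv i) ≤ 1) ∧
  -- post `pⱼᶜ` has quota 3
  (∀ j, cnt M (.pc j) ≤ 3) ∧
  -- class `S_{ij} = {a_{ij}, b_{ij}}` of `pⱼᶜ`, quota 1
  (∀ j, ∀ i ∈ Cl j,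
    (({App.ac i j, App.bc i j} : Finset (App n m)).filter
      fun x => M x = some (.pc j)).card ≤ 1) ∧
  -- class `S_{1j} = {a_{ij} : i ∈ C_j}` of `pⱼᶜ`, quota 1
  (∀ j, ((Cl j).filter fun i => M (.ac i j) = some (.pc j)).card ≤ 1) ∧
  -- class `S_{2j} = {b_{ij} : i ∈ C_j}` of `pⱼᶜ`, quota 2
  (∀ j, ((Cl j).filter fun i => M (.bc i j) = some (.pc j)).card ≤ 2) ∧
  -- post `pᵢᵗ` has quota `k_i`
  (∀ i, cnt M (.pt i) ≤ occ Cl i) ∧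
  -- class `Sⱼᵗ = {a_{ij}, aᵢ}` of `pᵢᵗ`, quota 1
  (∀ i, ∀ j, i ∈ Cl j →
    (({App.ac i j, App.av i} : Finset (App n m)).filter
      fun x => M x = some (.pt i)).card ≤ 1) ∧
  -- post `pᵢᶠ` has quota `k_i`
  (∀ i, cnt M (.pf i) ≤ occ Cl i) ∧
  -- class `Sⱼᶠ = {b_{ij}, bᵢ}` of `pᵢᶠ`, quota 1
  (∀ i, ∀ j, i ∈ Cl j →
    (({App.bc i j, App.bv i} : Finset (App n m)).filter
      fun x => M x = some (.pf i)).card ≤ 1)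

/-- Applicant `x` prefers matching `M` to matching `M'`. -/
def Prefers (M M' : App n m → Option (Post n m)) (x : App n m) : Prop :=
  ∃ p, M x = some p ∧ (M' x = none ∨ ∃ p', M' x = some p' ∧ rk x p < rk x p')

/-- `M'` is more popular than `M`. -/
def MorePopular (M' M : App n m → Option (Post n m)) : Prop :=
  (Finset.univ.filter fun x => Prefers M M' x).card <
    (Finset.univ.filter fun x => Prefers M' M x).card

/-- `M` is popular among all feasible matchings of `G_φ`. -/
def Popular (Cl : Fin m → Finset (Fin n)) (M : App n m → Option (Post n m)) : Prop :=
  IsMatching Cl M ∧ Feasible Cl M ∧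
    ∀ M', IsMatching Cl M' → Feasible Cl M' → ¬ MorePopular M' M

/-- `φ` has a 1-in-3 satisfying assignment. -/
def OneInThree (Cl : Fin m → Finset (Fin n)) : Prop :=
  ∃ η : Fin n → Bool, ∀ j, ((Cl j).filter fun i => η i = true).card = 1

end Red


namespace Red

variable {n m : ℕ}

open Finset

def appEquiv (n m : ℕ) : ((Fin n ⊕ Fin n) ⊕ ((Fin m × Fin n) ⊕ (Fin m × Fin n))) ≃ App n m where
  toFun x := match x with
    | .inl (.inl i) => .av i
    | .inl (.inr i) => .bv i
    | .inr (.inl (j, i)) => .ac i j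
    | .inr (.inr (j, i)) => .bc i j
  invFun x := match x with
    | .av i => .inl (.inl i)
    | .bv i => .inl (.inr i)
    | .ac i j => .inr (.inl (j, i))
    | .bc i j => .inr (.inr (j, i))
  left_inv x := by rcases x with (i|i)|(⟨j,i⟩|⟨j,i⟩) <;> rfl
  right_inv x := by cases x <;> rfl

lemma card_split (P : App n m → Prop) [DecidablePred P] :
    (univ.filter P).card
      = (univ.filter fun i => P (.av i)).card
      + (univ.filter fun i => P (.bv i)).card
      + ∑ j, (univ.filter fun i => P (.ac i j)).card
      + ∑ j, (univ.filter fun i => P (.bc i j)).card := by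
  classical
  simp only [Finset.card_filter]
  rw [← Fintype.sum_equiv (appEquiv n m)
    (fun x => if P ((appEquiv n m) x) then 1 else 0) _ (fun x => rfl)]
  simp only [Fintype.sum_sum_type, Fintype.sum_prod_type]
  simp only [appEquiv, Equiv.coe_fn_mk]
  rw [← add_assoc]
  congr! 1

lemma filter_mem_and (s : Finset (Fin n)) (Q : Fin n → Prop) [DecidablePred Q] :
    (univ.filter fun i => i ∈ s ∧ Q i) = s.filter Q := by
  ext i; simp

lemma rank1_ne_rank2 (x : App n m) : rank1 x ≠ rank2 x := by
  cases x <;> simp [rank1, rank2]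

def mkM (Cl : Fin m → Finset (Fin n)) (η : Fin n → Bool) : App n m → Option (Post n m)
  | .av i => if η i then some (.pt i) else some (.pv i)
  | .bv i => if η i then some (.pv i) else some (.pf i)
  | .ac i j => if i ∈ Cl j then (if η i then some (.pc j) else some (.pt i)) else none
  | .bc i j => if i ∈ Cl j then (if η i then some (.pf i) else some (.pc j)) else none

lemma mkM_isMatching (Cl : Fin m → Finset (Fin n)) (η : Fin n → Bool) :
    IsMatching Cl (mkM Cl η) := by
  intro x p h
  cases x <;> simp [mkM] at h <;> split_ifs at h <;>
    simp_all [Valid, rank1, rank2]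

lemma mkM_feasible (Cl : Fin m → Finset (Fin n)) (η : Fin n → Bool)
    (h3 : ∀ j, (Cl j).card = 3) (hocc : ∀ i, ∃ j, i ∈ Cl j)
    (hη : ∀ j, ((Cl j).filter fun i => η i = true).card = 1) :
    Feasible Cl (mkM Cl η) := by
  have key4 : ∀ j, (Cl j).filter (fun i => mkM Cl η (.ac i j) = some (.pc j))
      = (Cl j).filter (fun i => η i = true) := by
    intro j
    apply Finset.filter_congr; intro i hi
    by_cases h : η i <;> simp [mkM, hi, h]
  have key5 : ∀ j, (Cl j).filter (fun i => mkM Cl η (.bc i j) = some (.pc j))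
      = (Cl j).filter (fun i => ¬ η i = true) := by
    intro j
    apply Finset.filter_congr; intro i hi
    by_cases h : η i <;> simp [mkM, hi, h]
  refine ⟨?_, ?_, ?_, ?_, ?_, ?_, ?_, ?_, ?_⟩
  · -- pv quota
    intro i
    have hsub : (univ.filter fun x => mkM Cl η x = some (.pv i))
        ⊆ {if η i then App.bv i else App.av i} := by
      intro x hx
      simp only [Finset.mem_filter] at hx
      rcases x with i'|i'|⟨i',j⟩|⟨i',j⟩ <;> simp [mkM] at hx <;>
        split_ifs at hx <;> simp_all
    simpa [cnt] using Finset.card_le_card hsub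
  · -- pc quota
    intro j
    have hsub : (univ.filter fun x => mkM Cl η x = some (.pc j))
        ⊆ (Cl j).image (fun i => if η i then App.ac i j else App.bc i j) := by
      intro x hx
      simp only [Finset.mem_filter] at hx
      rcases x with i'|i'|⟨i',j'⟩|⟨i',j'⟩
      · simp [mkM] at hx; split_ifs at hx <;> simp at hx
      · simp [mkM] at hx; split_ifs at hx <;> simp at hx
      · simp [mkM] at hx
        split_ifs at hx with hm hb <;> simp_all
        obtain ⟨hx1, hx2⟩ := hx
        subst hx2
        exact ⟨i', hx1, by simp [hm]⟩
      · simp [mkM] at hx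
        split_ifs at hx with hm hb <;> simp_all
        obtain ⟨hx1, hx2⟩ := hx
        subst hx2
        exact ⟨i', hx1, by simp [hm]⟩
    calc cnt (mkM Cl η) (.pc j) ≤ _ := Finset.card_le_card hsub
      _ ≤ (Cl j).card := Finset.card_image_le
      _ = 3 := h3 j
  · -- S_ij class
    intro j i hij
    by_cases h : η i <;>
      rw [Finset.filter_insert, Finset.filter_singleton] <;> simp [mkM, hij, h]
  · -- S1j class
    intro j
    rw [key4 j, hη j]
  · -- S2j class
    intro j
    have := Finset.card_filter_add_card_filter_not (s := Cl j)
      (p := fun i => η i = true)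
    rw [key5 j]
    have h1 := hη j
    have h2 := h3 j
    omega
  · -- pt quota
    intro i
    have hop : 0 < occ Cl i := by
      obtain ⟨j, hj⟩ := hocc i
      exact Finset.card_pos.2 ⟨j, by simp [hj]⟩
    by_cases h : η i
    · have hsub : (univ.filter fun x => mkM Cl η x = some (.pt i))
          ⊆ {App.av i} := by
        intro x hx
        simp only [Finset.mem_filter] at hx
        rcases x with i'|i'|⟨i',j⟩|⟨i',j⟩ <;> simp [mkM] at hx <;>
          split_ifs at hx <;> simp_all
      have := Finset.card_le_card hsub
      simp only [Finset.card_singleton] at this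
      calc cnt (mkM Cl η) (.pt i) ≤ 1 := this
        _ ≤ occ Cl i := hop
    · have hsub : (univ.filter fun x => mkM Cl η x = some (.pt i))
          ⊆ (univ.filter fun j => i ∈ Cl j).image (fun j => App.ac i j) := by
        intro x hx
        simp only [Finset.mem_filter] at hx
        rcases x with i'|i'|⟨i',j⟩|⟨i',j⟩ <;> simp [mkM] at hx <;>
          split_ifs at hx <;> simp_all [Finset.mem_image] <;>
          exact hx.2 ▸ hx.1
      calc cnt (mkM Cl η) (.pt i) ≤ _ := Finset.card_le_card hsub
        _ ≤ _ := Finset.card_image_le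
        _ = occ Cl i := rfl
  · -- S_j^t class
    intro i j hij
    by_cases h : η i <;>
      rw [Finset.filter_insert, Finset.filter_singleton] <;> simp [mkM, hij, h]
  · -- pf quota
    intro i
    have hop : 0 < occ Cl i := by
      obtain ⟨j, hj⟩ := hocc i
      exact Finset.card_pos.2 ⟨j, by simp [hj]⟩
    by_cases h : η i
    · have hsub : (univ.filter fun x => mkM Cl η x = some (.pf i))
          ⊆ (univ.filter fun j => i ∈ Cl j).image (fun j => App.bc i j) := by
        intro x hx
        simp only [Finset.mem_filter] at hx
        rcases x with i'|i'|⟨i',j⟩|⟨i',j⟩ <;> simp [mkM] at hx <;>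
          split_ifs at hx <;> simp_all [Finset.mem_image] <;>
          exact hx.2 ▸ hx.1
      calc cnt (mkM Cl η) (.pf i) ≤ _ := Finset.card_le_card hsub
        _ ≤ _ := Finset.card_image_le
        _ = occ Cl i := rfl
    · have hsub : (univ.filter fun x => mkM Cl η x = some (.pf i))
          ⊆ {App.bv i} := by
        intro x hx
        simp only [Finset.mem_filter] at hx
        rcases x with i'|i'|⟨i',j⟩|⟨i',j⟩ <;> simp [mkM] at hx <;>
          split_ifs at hx <;> simp_all
      have := Finset.card_le_card hsub
      simp only [Finset.card_singleton] at this
      calc cnt (mkM Cl η) (.pf i) ≤ 1 := this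
        _ ≤ occ Cl i := hop
  · -- S_j^f class
    intro i j hij
    by_cases h : η i <;>
      rw [Finset.filter_insert, Finset.filter_singleton] <;> simp [mkM, hij, h]

lemma filter_bool_split (η : Fin n → Bool) :
    (univ.filter fun i => η i = true).card
      + (univ.filter fun i => η i = false).card = n := by
  have := Finset.card_filter_add_card_filter_not (s := (univ : Finset (Fin n)))
    (p := fun i => η i = true)
  simp only [Bool.not_eq_true] at this
  simpa using this

lemma mkM_count1 (Cl : Fin m → Finset (Fin n)) (η : Fin n → Bool)
    (h3 : ∀ j, (Cl j).card = 3)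
    (hη : ∀ j, ((Cl j).filter fun i => η i = true).card = 1) :
    (univ.filter fun x => mkM Cl η x = some (rank1 x)).card = 3 * m + n := by
  rw [card_split]
  have hav : (univ.filter fun i => mkM Cl η (.av i) = some (rank1 (.av i)))
      = (univ.filter fun i => η i = false) := by
    ext i; by_cases h : η i <;> simp [mkM, rank1, h]
  have hbv : (univ.filter fun i => mkM Cl η (.bv i) = some (rank1 (.bv i)))
      = (univ.filter fun i => η i = true) := by
    ext i; by_cases h : η i <;> simp [mkM, rank1, h]
  have hac : ∀ j, (univ.filter fun i => mkM Cl η (.ac i j) = some (rank1 (.ac i j)))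
      = (Cl j).filter (fun i => η i = true) := by
    intro j; ext i; simp only [Finset.mem_filter, Finset.mem_univ, true_and]; simp only [mkM, rank1]
    split_ifs with hm hb <;> simp_all
  have hbc : ∀ j, (univ.filter fun i => mkM Cl η (.bc i j) = some (rank1 (.bc i j)))
      = (Cl j).filter (fun i => η i = false) := by
    intro j; ext i; simp only [Finset.mem_filter, Finset.mem_univ, true_and]; simp only [mkM, rank1]
    split_ifs with hm hb <;> simp_all
  have h2 : ∀ j, ((Cl j).filter fun i => η i = false).card = 2 := by
    intro j
    have := Finset.card_filter_add_card_filter_not (s := Cl j)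
      (p := fun i => η i = true)
    simp only [Bool.not_eq_true] at this
    have := hη j; have := h3 j
    omega
  simp only [hav, hbv]
  have c1 : ∑ j, ((univ.filter fun i => mkM Cl η (.ac i j) = some (rank1 (.ac i j))).card)
      = m := by
    rw [Finset.sum_congr rfl (fun j _ => by rw [hac j, hη j])]; simp
  have c2 : ∑ j, ((univ.filter fun i => mkM Cl η (.bc i j) = some (rank1 (.bc i j))).card)
      = 2 * m := by
    rw [Finset.sum_congr rfl (fun j _ => by rw [hbc j, h2 j])]; simp [mul_comm]
  rw [c1, c2]
  have := filter_bool_split η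
  omega

lemma mkM_count2 (Cl : Fin m → Finset (Fin n)) (η : Fin n → Bool)
    (h3 : ∀ j, (Cl j).card = 3)
    (hη : ∀ j, ((Cl j).filter fun i => η i = true).card = 1) :
    (univ.filter fun x => mkM Cl η x = some (rank2 x)).card = 3 * m + n := by
  rw [card_split]
  have hav : (univ.filter fun i => mkM Cl η (.av i) = some (rank2 (.av i)))
      = (univ.filter fun i => η i = true) := by
    ext i; by_cases h : η i <;> simp [mkM, rank2, h]
  have hbv : (univ.filter fun i => mkM Cl η (.bv i) = some (rank2 (.bv i)))
      = (univ.filter fun i => η i = false) := by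
    ext i; by_cases h : η i <;> simp [mkM, rank2, h]
  have hac : ∀ j, (univ.filter fun i => mkM Cl η (.ac i j) = some (rank2 (.ac i j)))
      = (Cl j).filter (fun i => η i = false) := by
    intro j; ext i; simp only [Finset.mem_filter, Finset.mem_univ, true_and]; simp only [mkM, rank2]
    split_ifs with hm hb <;> simp_all
  have hbc : ∀ j, (univ.filter fun i => mkM Cl η (.bc i j) = some (rank2 (.bc i j)))
      = (Cl j).filter (fun i => η i = true) := by
    intro j; ext i; simp only [Finset.mem_filter, Finset.mem_univ, true_and]; simp only [mkM, rank2]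
    split_ifs with hm hb <;> simp_all
  have h2 : ∀ j, ((Cl j).filter fun i => η i = false).card = 2 := by
    intro j
    have := Finset.card_filter_add_card_filter_not (s := Cl j)
      (p := fun i => η i = true)
    simp only [Bool.not_eq_true] at this
    have := hη j; have := h3 j
    omega
  simp only [hav, hbv]
  have c1 : ∑ j, ((univ.filter fun i => mkM Cl η (.ac i j) = some (rank2 (.ac i j))).card)
      = 2 * m := by
    rw [Finset.sum_congr rfl (fun j _ => by rw [hac j, h2 j])]; simp [mul_comm]
  have c2 : ∑ j, ((univ.filter fun i => mkM Cl η (.bc i j) = some (rank2 (.bc i j))).card)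
      = m := by
    rw [Finset.sum_congr rfl (fun j _ => by rw [hbc j, hη j])]; simp
  rw [c1, c2]
  have := filter_bool_split η
  omega

lemma two_le_filter_pair {α : Type*} [DecidableEq α] {a b : α} (hab : a ≠ b)
    {q : α → Prop} [DecidablePred q] (ha : q a) (hb : q b) :
    2 ≤ (({a, b} : Finset α).filter q).card := by
  have h : ({a, b} : Finset α).filter q = {a, b} := by
    apply Finset.filter_true_of_mem
    intro x hx
    simp only [Finset.mem_insert, Finset.mem_singleton] at hx
    rcases hx with rfl | rfl <;> assumption
  rw [h, Finset.card_pair hab]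

lemma two_le_cnt {M : App n m → Option (Post n m)} {a b : App n m} (hab : a ≠ b)
    {p : Post n m} (ha : M a = some p) (hb : M b = some p) : 2 ≤ cnt M p := by
  have hsub : ({a, b} : Finset (App n m)) ⊆ univ.filter fun x => M x = some p := by
    intro x hx
    simp only [Finset.mem_insert, Finset.mem_singleton] at hx
    rcases hx with rfl | rfl <;> simp [ha, hb]
  have := Finset.card_le_card hsub
  rwa [Finset.card_pair hab] at this

lemma forward (Cl : Fin m → Finset (Fin n)) (h3 : ∀ j, (Cl j).card = 3)
    (M : App n m → Option (Post n m)) (hM : IsMatching Cl M) (hF : Feasible Cl M)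
    (h1 : (univ.filter fun x => M x = some (rank1 x)).card = 3 * m + n)
    (h2 : (univ.filter fun x => M x = some (rank2 x)).card = 3 * m + n) :
    OneInThree Cl := by
  obtain ⟨hpv, hpc, hSij, hS1, hS2, hpt, hSt, hpf, hSf⟩ := hF
  -- Step A: every valid applicant is matched
  have hdisj : Disjoint (univ.filter fun x : App n m => M x = some (rank1 x))
      (univ.filter fun x : App n m => M x = some (rank2 x)) := by
    rw [Finset.disjoint_left]
    intro x hx1 hx2
    simp only [Finset.mem_filter, Finset.mem_univ, true_and] at hx1 hx2
    exact rank1_ne_rank2 x (Option.some.inj (hx1.symm.trans hx2))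
  have hVcard : (univ.filter fun x : App n m => Valid Cl x).card = 2 * n + 6 * m := by
    rw [card_split]
    have e1 : (univ.filter fun i : Fin n => Valid Cl (App.av i)) = univ := by
      exact Finset.filter_true_of_mem fun _ _ => trivial
    have e2 : (univ.filter fun i : Fin n => Valid Cl (App.bv i)) = univ := by
      exact Finset.filter_true_of_mem fun _ _ => trivial
    have e3 : ∀ j, (univ.filter fun i : Fin n => Valid Cl (App.ac i j)) = Cl j := by
      intro j; ext i; simp only [Finset.mem_filter, Finset.mem_univ, true_and]; exact Iff.rfl
    have e4 : ∀ j, (univ.filter fun i : Fin n => Valid Cl (App.bc i j)) = Cl j := by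
      intro j; ext i; simp only [Finset.mem_filter, Finset.mem_univ, true_and]; exact Iff.rfl
    have s3 : ∑ j, (univ.filter fun i : Fin n => Valid Cl (App.ac i j)).card = 3 * m := by
      rw [Finset.sum_congr rfl (fun j _ => by rw [e3 j, h3 j])]; simp [mul_comm]
    have s4 : ∑ j, (univ.filter fun i : Fin n => Valid Cl (App.bc i j)).card = 3 * m := by
      rw [Finset.sum_congr rfl (fun j _ => by rw [e4 j, h3 j])]; simp [mul_comm]
    rw [e1, e2, s3, s4]
    simp; omega
  have hEq : (univ.filter fun x : App n m => M x = some (rank1 x))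
      ∪ (univ.filter fun x : App n m => M x = some (rank2 x))
      = univ.filter fun x : App n m => Valid Cl x := by
    apply Finset.eq_of_subset_of_card_le
    · intro x hx
      simp only [Finset.mem_union, Finset.mem_filter, Finset.mem_univ, true_and] at hx ⊢
      rcases hx with h | h
      exacts [(hM x _ h).1, (hM x _ h).1]
    · rw [hVcard, Finset.card_union_of_disjoint hdisj, h1, h2]; omega
  have hall : ∀ x : App n m, Valid Cl x →
      M x = some (rank1 x) ∨ M x = some (rank2 x) := by
    intro x hx
    have hmem : x ∈ univ.filter fun x : App n m => Valid Cl x := by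
      simp only [Finset.mem_filter, Finset.mem_univ, true_and]; exact hx
    rw [← hEq] at hmem
    simpa only [Finset.mem_union, Finset.mem_filter, Finset.mem_univ, true_and] using hmem
  -- Step B: exactly one a_{ij} matched to pc j, for each j
  have hCeq : ∀ j, (univ.filter fun i : Fin n => M (.ac i j) = some (.pc j))
      = (Cl j).filter (fun i => M (.ac i j) = some (.pc j)) := by
    intro j; ext i
    simp only [Finset.mem_filter, Finset.mem_univ, true_and]
    exact ⟨fun h => ⟨(hM _ _ h).1, h⟩, fun h => h.2⟩
  have hDeq : ∀ j, (univ.filter fun i : Fin n => M (.bc i j) = some (.pc j))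
      = (Cl j).filter (fun i => M (.bc i j) = some (.pc j)) := by
    intro j; ext i
    simp only [Finset.mem_filter, Finset.mem_univ, true_and]
    exact ⟨fun h => ⟨(hM _ _ h).1, h⟩, fun h => h.2⟩
  have hC1 : ∀ j, (univ.filter fun i : Fin n => M (.ac i j) = some (.pc j)).card ≤ 1 :=
    fun j => le_of_le_of_eq (le_of_eq (congrArg Finset.card (hCeq j))) (rfl) |>.trans (hS1 j)
  have hD2 : ∀ j, (univ.filter fun i : Fin n => M (.bc i j) = some (.pc j)).card ≤ 2 :=
    fun j => le_of_le_of_eq (le_of_eq (congrArg Finset.card (hDeq j))) (rfl) |>.trans (hS2 j)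
  -- per-variable bound at pv
  have hABi : ∀ i : Fin n, ¬ (M (.av i) = some (.pv i) ∧ M (.bv i) = some (.pv i)) := by
    rintro i ⟨ha, hb⟩
    have := two_le_cnt (M := M) (a := .av i) (b := .bv i) (by simp) ha hb
    have := hpv i
    omega
  have hAB : (univ.filter fun i : Fin n => M (.av i) = some (.pv i)).card
      + (univ.filter fun i : Fin n => M (.bv i) = some (.pv i)).card ≤ n := by
    simp only [Finset.card_filter]
    rw [← Finset.sum_add_distrib]
    calc ∑ i : Fin n, ((if M (.av i) = some (.pv i) then 1 else 0)
          + (if M (.bv i) = some (.pv i) then 1 else 0))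
        ≤ ∑ _i : Fin n, 1 := by
          apply Finset.sum_le_sum
          intro i _
          by_cases ha : M (.av i) = some (.pv i) <;>
            by_cases hb : M (.bv i) = some (.pv i) <;> simp [ha, hb] <;>
            exact absurd ⟨ha, hb⟩ (hABi i)
      _ = n := by simp
  have hsplit := card_split (P := fun x : App n m => M x = some (rank1 x))
  rw [h1] at hsplit
  simp only [rank1] at hsplit
  change 3 * m + n = (univ.filter fun i : Fin n => M (.av i) = some (.pv i)).card
    + (univ.filter fun i : Fin n => M (.bv i) = some (.pv i)).card
    + ∑ j, (univ.filter fun i : Fin n => M (.ac i j) = some (.pc j)).card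
    + ∑ j, (univ.filter fun i : Fin n => M (.bc i j) = some (.pc j)).card at hsplit
  have hsumC : ∑ j, (univ.filter fun i : Fin n => M (.ac i j) = some (.pc j)).card ≤ m := by
    calc _ ≤ ∑ _j : Fin m, 1 := Finset.sum_le_sum (fun j _ => hC1 j)
      _ = m := by simp
  have hsumD : ∑ j, (univ.filter fun i : Fin n => M (.bc i j) = some (.pc j)).card ≤ 2 * m := by
    calc _ ≤ ∑ _j : Fin m, 2 := Finset.sum_le_sum (fun j _ => hD2 j)
      _ = 2 * m := by simp [mul_comm]
  have hsumCeq : ∑ j, (univ.filter fun i : Fin n => M (.ac i j) = some (.pc j)).card = m := by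
    omega
  have hCj1 : ∀ j, (univ.filter fun i : Fin n => M (.ac i j) = some (.pc j)).card = 1 := by
    intro j0
    by_contra hne
    have hlt : (univ.filter fun i : Fin n => M (.ac i j0) = some (.pc j0)).card < 1 :=
      lt_of_le_of_ne (hC1 j0) hne
    have : ∑ j, (univ.filter fun i : Fin n => M (.ac i j) = some (.pc j)).card
        < ∑ _j : Fin m, 1 :=
      Finset.sum_lt_sum (fun j _ => hC1 j) ⟨j0, Finset.mem_univ _, hlt⟩
    simp only [Finset.sum_const, Finset.card_univ, Fintype.card_fin, smul_eq_mul,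
      mul_one] at this
    omega
  -- the assignment
  refine ⟨fun i => decide (M (.av i) = some (.pt i)), fun j => ?_⟩
  have key : ∀ i ∈ Cl j, ((decide (M (.av i) = some (.pt i)) = true)
      ↔ M (.ac i j) = some (.pc j)) := by
    intro i hij
    constructor
    · intro h
      have hav : M (.av i) = some (.pt i) := of_decide_eq_true h
      rcases hall (.ac i j) hij with h' | h'
      · simpa [rank1] using h'
      · exfalso
        simp only [rank2] at h'
        have hge := two_le_filter_pair (a := App.ac i j) (b := App.av i) (by simp)
          (q := fun x => M x = some (.pt i)) h' hav
        have := hSt i j hij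
        omega
    · intro h
      by_contra hne
      have havne : M (.av i) ≠ some (.pt i) := fun hc => hne (decide_eq_true hc)
      have hav : M (.av i) = some (.pv i) := by
        rcases hall (.av i) trivial with h' | h'
        · simpa [rank1] using h'
        · exact absurd (by simpa [rank2] using h') havne
      have hbv : M (.bv i) = some (.pf i) := by
        rcases hall (.bv i) trivial with h' | h'
        · exact absurd ⟨hav, by simpa [rank1] using h'⟩ (hABi i)
        · simpa [rank2] using h'
      rcases hall (.bc i j) hij with h' | h'
      · simp only [rank1] at h'
        have hge := two_le_filter_pair (a := App.ac i j) (b := App.bc i j) (by simp)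
          (q := fun x => M x = some (.pc j)) h h'
        have := hSij j i hij
        omega
      · simp only [rank2] at h'
        have hge := two_le_filter_pair (a := App.bc i j) (b := App.bv i) (by simp)
          (q := fun x => M x = some (.pf i)) h' hbv
        have := hSf i j hij
        omega
  have heq2 : (Cl j).filter (fun i => decide (M (.av i) = some (.pt i)) = true)
      = (Cl j).filter (fun i => M (.ac i j) = some (.pc j)) := by
    apply Finset.filter_congr
    intro i hi
    exact key i hi
  rw [heq2, ← hCeq j]
  exact hCj1 j

end Red

/-- for a monotone 1-in-3 SAT instance `φ` (clauses of size exactly 3,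
every variable occurring in some clause), the instance `G_φ` admits a feasible matching
of signature `(3m + n, 3m + n)` — exactly `3m + n` applicants matched to their rank-1
post and exactly `3m + n` to their rank-2 post — iff `φ` has a 1-in-3 satisfying
assignment. -/
theorem stmt14 (n m : ℕ) (Cl : Fin m → Finset (Fin n))
    (h3 : ∀ j, (Cl j).card = 3) (hocc : ∀ i, ∃ j, i ∈ Cl j) :
    (∃ M : App n m → Option (Post n m), Red.IsMatching Cl M ∧ Red.Feasible Cl M ∧
      (Finset.univ.filter fun x => M x = some (Red.rank1 x)).card = 3 * m + n ∧
      (Finset.univ.filter fun x => M x = some (Red.rank2 x)).card = 3 * m + n) ↔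
    Red.OneInThree Cl := by
  constructor
  · rintro ⟨M, hM, hF, h1, h2⟩
    exact Red.forward Cl h3 M hM hF h1 h2
  · rintro ⟨η, hη⟩
    exact ⟨Red.mkM Cl η, Red.mkM_isMatching Cl η, Red.mkM_feasible Cl η h3 hocc hη,
      Red.mkM_count1 Cl η h3 hη, Red.mkM_count2 Cl η h3 hη⟩
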